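/- If 1 < μ ≤ ν < 4, then for every θ ∈ [μ,ν], the map F_θ(x) = θx(1-x) maps the interval [a,b] into itself, where b = ν/4 and a = min(1 - 1/μ, F_μ(ν/4)). -/
import Mathlib


theorem invariant_interval_of_quadratic_family
    (μ ν : ℝ) (hμ : 1 < μ) (hμν : μ ≤ ν) (hν : ν < 4)
    (a b : ℝ) (hb : b = ν / 4)
    (ha : a = min (1 - 1 / μ) (μ * (ν / 4) * (1 - ν / 4)))
    (θ : ℝ) (hθ : θ ∈ Set.Icc μ ν)
    (x : ℝ) (hx : x ∈ Set.Icc a b) :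
    θ * x * (1 - x) ∈ Set.Icc a b := by
  obtain ⟨hθ1, hθ2⟩ := hθ
  obtain ⟨hx1, hx2⟩ := hx
  have hμ0 : 0 < μ := by linarith
  have hν1 : 1 < ν := lt_of_lt_of_le hμ hμν
  have hb1 : b < 1 := by rw [hb]; linarith
  have hb0 : 0 < b := by rw [hb]; linarith
  have haμ : a ≤ 1 - 1 / μ := ha ▸ min_le_left _ _
  have habb : a ≤ μ * b * (1 - b) := by rw [ha, hb]; exact min_le_right _ _
  have ha1 : 0 < a := by
    rw [ha]
    apply lt_min
    · have h : 1 / μ < 1 := by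
        rw [div_lt_one hμ0]; exact hμ
      linarith
    · have : 0 < ν / 4 := by linarith
      have : 0 < 1 - ν / 4 := by linarith
      positivity
  have hx0 : 0 < x := lt_of_lt_of_le ha1 hx1
  have hx3 : x < 1 := lt_of_le_of_lt hx2 hb1
  have h1 : a ≤ μ * a * (1 - a) := by
    have h2 : 1 / μ ≤ 1 - a := by linarith
    have h3 : μ * (1 / μ) ≤ μ * (1 - a) := by
      exact mul_le_mul_of_nonneg_left h2 (le_of_lt hμ0)
    rw [mul_one_div_cancel (ne_of_gt hμ0)] at h3
    nlinarith
  constructor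
  · have key : a ≤ μ * x * (1 - x) := by
      rcases eq_or_lt_of_le (hx1.trans hx2) with hab | hab
      · have hxa : x = a := le_antisymm (hab ▸ hx2) hx1
        rw [hxa]; exact h1
      · have t1 : 0 ≤ (b - x) * (μ * a * (1 - a) - a) :=
          mul_nonneg (by linarith) (by linarith)
        have t2 : 0 ≤ (x - a) * (μ * b * (1 - b) - a) :=
          mul_nonneg (by linarith) (by linarith)
        have t3 : 0 ≤ μ * (x - a) * (b - x) * (b - a) := by
          apply mul_nonneg (mul_nonneg (mul_nonneg hμ0.le (by linarith)) (by linarith))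
          linarith
        have hgt : 0 ≤ (b - a) * (μ * x * (1 - x) - a) := by nlinarith
        have hfin : 0 ≤ μ * x * (1 - x) - a :=
          nonneg_of_mul_nonneg_right (by linarith [hgt]) (sub_pos.2 hab)
        linarith
    have : μ * x * (1 - x) ≤ θ * x * (1 - x) := by
      have hxx : 0 ≤ x * (1 - x) := by nlinarith
      nlinarith
    linarith
  · have : θ * x * (1 - x) ≤ θ / 4 := by nlinarith [sq_nonneg (2 * x - 1)]
    rw [hb]; linarith
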